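/- Let $a > 0$ be an irrational real number. Then $\{ t \in \mathbb{C} : \exists s \in \mathbb{C},\ e^{2\pi (t+s)} = 1 \text{ and } e^{2\pi i (t - s)} = 1 \text{ and } e^{2\pi i ((1-ia)t - (1+ia)s)} = 1 \} = \tfrac{1}{2}\mathbb{Z} = \{ m/2 : m \in \mathbb{Z} \}$. -/
import Mathlib


/-- For `a > 0` irrational, the stabilizer
`{t ∈ ℂ : ∃ s, e^{2π(t+s)} = 1, e^{2πi(t-s)} = 1, e^{2πi((1-ia)t-(1+ia)s)} = 1}`
equals `(1/2)ℤ`. -/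
theorem stabilizer_irrational (a : ℝ) (ha : 0 < a) (hirr : Irrational a) :
    {t : ℂ | ∃ s : ℂ,
        Complex.exp (2 * (Real.pi : ℂ) * (t + s)) = 1 ∧
        Complex.exp (2 * (Real.pi : ℂ) * Complex.I * (t - s)) = 1 ∧
        Complex.exp (2 * (Real.pi : ℂ) * Complex.I *
          ((1 - Complex.I * (a : ℂ)) * t - (1 + Complex.I * (a : ℂ)) * s)) = 1} =
      {t : ℂ | ∃ m : ℤ, t = (m : ℂ) / 2} := by
  have hπ : (Real.pi : ℂ) ≠ 0 := Complex.ofReal_ne_zero.mpr Real.pi_ne_zero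
  have h2π : (2 * (Real.pi : ℂ)) ≠ 0 := by
    simp [hπ]
  have h2πI : (2 * (Real.pi : ℂ) * Complex.I) ≠ 0 := by
    simp [hπ, Complex.I_ne_zero]
  ext t
  simp only [Set.mem_setOf_eq, Complex.exp_eq_one_iff]
  constructor
  · rintro ⟨s, ⟨k, hk⟩, ⟨n, hn⟩, ⟨m, hm⟩⟩
    have h1 : t + s = (k : ℂ) * Complex.I := by
      have : (2 * (Real.pi : ℂ)) * (t + s) = (2 * (Real.pi : ℂ)) * ((k : ℂ) * Complex.I) := by
        rw [hk]; ring
      exact mul_left_cancel₀ h2π this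
    have h2 : t - s = (n : ℂ) := by
      have : (2 * (Real.pi : ℂ) * Complex.I) * (t - s) =
          (2 * (Real.pi : ℂ) * Complex.I) * (n : ℂ) := by rw [hn]; ring
      exact mul_left_cancel₀ h2πI this
    have h3 : (1 - Complex.I * (a : ℂ)) * t - (1 + Complex.I * (a : ℂ)) * s = (m : ℂ) := by
      have : (2 * (Real.pi : ℂ) * Complex.I) *
          ((1 - Complex.I * (a : ℂ)) * t - (1 + Complex.I * (a : ℂ)) * s) =
          (2 * (Real.pi : ℂ) * Complex.I) * (m : ℂ) := by rw [hm]; ring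
      exact mul_left_cancel₀ h2πI this
    -- derive (n : ℂ) + a * k = m
    have hkey : ((n : ℝ) + a * (k : ℝ) : ℂ) = ((m : ℝ) : ℂ) := by
      push_cast
      have hIsq : Complex.I * Complex.I = -1 := Complex.I_mul_I
      linear_combination h3 - h2 + Complex.I * (a : ℂ) * h1 +
        (a : ℂ) * (k : ℂ) * hIsq
    have hreal : (n : ℝ) + a * (k : ℝ) = (m : ℝ) := by exact_mod_cast hkey
    have hk0 : k = 0 := by
      by_contra hk0
      have hkR : ((k : ℝ)) ≠ 0 := Int.cast_ne_zero.mpr hk0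
      have : a = ((m : ℝ) - (n : ℝ)) / (k : ℝ) := by
        field_simp
        linarith
      exact hirr ⟨((m - n : ℤ) : ℚ) / ((k : ℤ) : ℚ), by push_cast; rw [this]⟩
    rw [hk0] at h1
    simp at h1
    refine ⟨n, ?_⟩
    have : t + s = 0 := h1
    have h2t : 2 * t = (n : ℂ) := by linear_combination h2 + this
    linear_combination h2t / 2
  · rintro ⟨m, rfl⟩
    refine ⟨-((m : ℂ) / 2), ⟨0, by push_cast; ring⟩, ⟨m, by push_cast; ring⟩,
      ⟨m, by push_cast; ring⟩⟩
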